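/- For real k, k' with 0 < k < 1, 0 < k' < 1, and k² + k'² = 1, the complete elliptic integral of the first kind satisfies the Landen-type identity K(k) = (2/(1+k')) · K((1-k')/(1+k')). -/

import Mathlib

open Real MeasureTheory

/-- The complete elliptic integral of the first kind. -/
noncomputable def ellipticK (k : ℝ) : ℝ :=
  ∫ t in (0:ℝ)..1, 1 / (Real.sqrt (1 - t ^ 2) * Real.sqrt (1 - k ^ 2 * t ^ 2))

open Set Filter Topology

namespace LandenAux

noncomputable def F (k t : ℝ) : ℝ :=
  1 / (Real.sqrt (1 - t ^ 2) * Real.sqrt (1 - k ^ 2 * t ^ 2))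

lemma F_contAt {k : ℝ} (hk : k ^ 2 < 1) {t : ℝ} (ht1 : t ^ 2 < 1) :
    ContinuousAt (F k) t := by
  have h1 : (0:ℝ) < 1 - t ^ 2 := by linarith
  have h2 : (0:ℝ) < 1 - k ^ 2 * t ^ 2 := by nlinarith [sq_nonneg k, sq_nonneg t, sq_nonneg (k*t)]
  have hne : Real.sqrt (1 - t ^ 2) * Real.sqrt (1 - k ^ 2 * t ^ 2) ≠ 0 := by
    positivity
  exact ContinuousAt.div continuousAt_const (by fun_prop) hne

lemma F_integrable {k : ℝ} (hk : k ^ 2 < 1) :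
    IntervalIntegrable (F k) volume 0 1 := by
  have hC : (0:ℝ) < Real.sqrt (1 - k ^ 2) := Real.sqrt_pos.2 (by linarith)
  have hg : IntervalIntegrable (fun t : ℝ => (Real.sqrt (1 - k^2))⁻¹ * (1 - t) ^ (-(1/2) : ℝ))
      volume 0 1 := by
    have h1 : IntervalIntegrable (fun x : ℝ => x ^ (-(1/2) : ℝ)) volume 0 1 :=
      intervalIntegral.intervalIntegrable_rpow' (by norm_num)
    have h2 := (h1.comp_sub_left 1)
    norm_num at h2
    exact (h2.symm.const_mul _)
  refine hg.mono_fun ?_ ?_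
  · refine Measurable.aestronglyMeasurable ?_
    unfold F
    fun_prop
  · refine (ae_restrict_iff' measurableSet_uIoc).mpr (ae_of_all _ fun t ht => ?_)
    rw [uIoc_of_le (by norm_num)] at ht
    obtain ⟨ht0, ht1⟩ := ht
    rcases eq_or_lt_of_le ht1 with h1 | h1
    · subst h1
      simp [F, Real.norm_eq_abs]
    · have htt : t ^ 2 < 1 := by nlinarith
      have hA : (0:ℝ) < 1 - t := by linarith
      have hkt : (0:ℝ) < 1 - k ^ 2 * t ^ 2 := by nlinarith [sq_nonneg (k*t)]
      have hFnn : 0 ≤ F k t := by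
        unfold F; positivity
      have hrw : (1 - t) ^ (-(1/2) : ℝ) = (Real.sqrt (1 - t))⁻¹ := by
        rw [Real.rpow_neg hA.le, Real.sqrt_eq_rpow]
      simp only [Real.norm_eq_abs]
      rw [abs_of_nonneg hFnn, abs_of_nonneg (by positivity), hrw]
      unfold F
      rw [one_div, mul_inv]
      have hle1 : (Real.sqrt (1 - t ^ 2))⁻¹ ≤ (Real.sqrt (1 - t))⁻¹ := by
        apply inv_anti₀ (Real.sqrt_pos.2 hA)
        apply Real.sqrt_le_sqrt
        nlinarith
      have hle2 : (Real.sqrt (1 - k ^ 2 * t ^ 2))⁻¹ ≤ (Real.sqrt (1 - k ^ 2))⁻¹ := by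
        apply inv_anti₀ hC
        apply Real.sqrt_le_sqrt
        nlinarith [sq_nonneg k]
      calc (Real.sqrt (1 - t ^ 2))⁻¹ * (Real.sqrt (1 - k ^ 2 * t ^ 2))⁻¹
          ≤ (Real.sqrt (1 - t))⁻¹ * (Real.sqrt (1 - k ^ 2))⁻¹ := by
            apply mul_le_mul hle1 hle2 (by positivity) (by positivity)
        _ = (Real.sqrt (1 - k ^ 2))⁻¹ * (Real.sqrt (1 - t))⁻¹ := by ring

noncomputable def phi (l s : ℝ) : ℝ := (1 + l) * s / (1 + l * s ^ 2)

lemma phi_hasDeriv {l : ℝ} (hl0 : 0 < l) (s : ℝ) :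
    HasDerivAt (phi l) ((1 + l) * (1 - l * s ^ 2) / (1 + l * s ^ 2) ^ 2) s := by
  have hd : (0:ℝ) < 1 + l * s ^ 2 := by positivity
  have h1 : HasDerivAt (fun x : ℝ => (1 + l) * x) (1 + l) s := by
    simpa using (hasDerivAt_id s).const_mul (1 + l)
  have h2 : HasDerivAt (fun x : ℝ => 1 + l * x ^ 2) (l * (2 * s)) s := by
    simpa using ((hasDerivAt_pow 2 s).const_mul l).const_add 1
  have := h1.div h2 hd.ne'
  convert this using 1
  · rfl
  · rfl
  · rfl
  · ring

lemma phi_mem {l s : ℝ} (hl0 : 0 < l) (hl1 : l < 1) (hs0 : 0 ≤ s) (hs1 : s < 1) :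
    0 ≤ phi l s ∧ phi l s < 1 := by
  have hd : (0:ℝ) < 1 + l * s ^ 2 := by positivity
  constructor
  · exact div_nonneg (by positivity) hd.le
  · rw [phi, div_lt_one hd]
    have hls : l * s < 1 := by nlinarith
    nlinarith [mul_pos (sub_pos.2 hs1) (sub_pos.2 hls)]

lemma key {k l : ℝ} (hl0 : 0 < l) (hl1 : l < 1) (hk0 : 0 ≤ k)
    (hk2 : k ^ 2 * (1 + l) ^ 2 = 4 * l) {b : ℝ} (hb0 : 0 ≤ b) (hb1 : b < 1) :
    (1 + l) * ∫ s in (0:ℝ)..b, F l s = ∫ t in (0:ℝ)..(phi l b), F k t := by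
  have hk2' : k ^ 2 < 1 := by nlinarith [sq_nonneg (1 - l)]
  have hb' : uIcc (0:ℝ) b = Icc 0 b := uIcc_of_le hb0
  have hsub := intervalIntegral.integral_comp_smul_deriv'
      (f := phi l) (f' := fun s => (1 + l) * (1 - l * s ^ 2) / (1 + l * s ^ 2) ^ 2)
      (g := F k) (a := 0) (b := b)
      (fun x _ => phi_hasDeriv hl0 x)
      (by
        apply Continuous.continuousOn
        apply Continuous.div (by fun_prop) (by fun_prop)
        intro x; positivity)
      (by
        rintro t ⟨s, hs, rfl⟩
        rw [hb'] at hs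
        obtain ⟨h0, h1⟩ := phi_mem hl0 hl1 hs.1 (lt_of_le_of_lt hs.2 hb1)
        exact (F_contAt hk2' (by nlinarith)).continuousWithinAt)
  have hphi0 : phi l 0 = 0 := by simp [phi]
  rw [hphi0] at hsub
  rw [← hsub, ← intervalIntegral.integral_const_mul]
  apply intervalIntegral.integral_congr
  intro s hs
  rw [hb'] at hs
  obtain ⟨hs0, hs1⟩ := hs
  have hs1' : s < 1 := lt_of_le_of_lt hs1 hb1
  have hls : l * s ^ 2 < 1 := by nlinarith
  have hd : (0:ℝ) < 1 + l * s ^ 2 := by positivity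
  have hss : s ^ 2 < 1 := by nlinarith
  have hl2s : l ^ 2 * s ^ 2 < 1 := by nlinarith
  have e1 : Real.sqrt (1 - phi l s ^ 2)
      = Real.sqrt (1 - s ^ 2) * Real.sqrt (1 - l ^ 2 * s ^ 2) / (1 + l * s ^ 2) := by
    have h1 : 1 - phi l s ^ 2 = (Real.sqrt (1 - s ^ 2) * Real.sqrt (1 - l ^ 2 * s ^ 2)
        / (1 + l * s ^ 2)) ^ 2 := by
      rw [div_pow, mul_pow, Real.sq_sqrt (by linarith), Real.sq_sqrt (by linarith)]
      unfold phi
      field_simp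
      ring
    rw [h1, Real.sqrt_sq (by positivity)]
  have e2 : Real.sqrt (1 - k ^ 2 * phi l s ^ 2) = (1 - l * s ^ 2) / (1 + l * s ^ 2) := by
    have h2 : 1 - k ^ 2 * phi l s ^ 2 = ((1 - l * s ^ 2) / (1 + l * s ^ 2)) ^ 2 := by
      unfold phi
      rw [div_pow, mul_pow]
      rw [div_pow]
      field_simp
      nlinarith [hk2, sq_nonneg s]
    rw [h2, Real.sqrt_sq (div_nonneg (by linarith) hd.le)]
  show (1 + l) * F l s = _ • (F k ∘ phi l) s
  simp only [Function.comp, smul_eq_mul]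
  unfold F
  rw [e1, e2]
  have hsq1 : Real.sqrt (1 - s ^ 2) ≠ 0 := (Real.sqrt_pos.2 (by linarith)).ne'
  have hsq2 : Real.sqrt (1 - l ^ 2 * s ^ 2) ≠ 0 := (Real.sqrt_pos.2 (by linarith)).ne'
  have h4 : (1 - l * s ^ 2) ≠ 0 := by linarith
  have h5 : (1 + l * s ^ 2) ≠ 0 := hd.ne'
  field_simp

lemma landen_aux {k l : ℝ} (hl0 : 0 < l) (hl1 : l < 1) (hk0 : 0 ≤ k)
    (hk2 : k ^ 2 * (1 + l) ^ 2 = 4 * l) :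
    ellipticK k = (1 + l) * ellipticK l := by
  have hk2' : k ^ 2 < 1 := by nlinarith [sq_nonneg (1 - l)]
  have hl2' : l ^ 2 < 1 := by nlinarith
  have hIk := F_integrable hk2'
  have hIl := F_integrable hl2'
  have hmem : (1:ℝ) ∈ uIcc (0:ℝ) 1 := right_mem_uIcc
  have h01 : uIcc (0:ℝ) 1 = Icc 0 1 := uIcc_of_le zero_le_one
  have hck : ContinuousWithinAt (fun x => ∫ t in (0:ℝ)..x, F k t) (Icc 0 1) 1 := by
    have := intervalIntegral.continuousOn_primitive_interval' (a := 0) hIk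
      (by rw [h01]; exact ⟨le_refl 0, zero_le_one⟩)
    rw [h01] at this
    exact this 1 ⟨zero_le_one, le_refl 1⟩
  have hcl : ContinuousWithinAt (fun x => ∫ t in (0:ℝ)..x, F l t) (Icc 0 1) 1 := by
    have := intervalIntegral.continuousOn_primitive_interval' (a := 0) hIl
      (by rw [h01]; exact ⟨le_refl 0, zero_le_one⟩)
    rw [h01] at this
    exact this 1 ⟨zero_le_one, le_refl 1⟩
  have hIcoIio : 𝓝[Ico (0:ℝ) 1] 1 = 𝓝[<] (1:ℝ) := nhdsWithin_Ico_eq_nhdsLT zero_lt_one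
  have hle : 𝓝[<] (1:ℝ) ≤ 𝓝[Icc (0:ℝ) 1] 1 := by
    rw [← hIcoIio]
    exact nhdsWithin_mono _ Ico_subset_Icc_self
  have T1 : Tendsto (fun b => (1 + l) * ∫ s in (0:ℝ)..b, F l s) (𝓝[<] (1:ℝ))
      (𝓝 ((1 + l) * ∫ s in (0:ℝ)..1, F l s)) :=
    ((hcl.tendsto.mono_left hle).const_mul _)
  have hphi1 : phi l 1 = 1 := by
    unfold phi; field_simp
  have Tphi : Tendsto (phi l) (𝓝[<] (1:ℝ)) (𝓝[Icc (0:ℝ) 1] 1) := by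
    have hcont : ContinuousWithinAt (phi l) (Ico (0:ℝ) 1) 1 := by
      apply Continuous.continuousWithinAt
      apply Continuous.div (by fun_prop) (by fun_prop)
      intro x; positivity
    have hmaps : MapsTo (phi l) (Ico (0:ℝ) 1) (Icc (0:ℝ) 1) := by
      intro s hs
      obtain ⟨h0, h1⟩ := phi_mem hl0 hl1 hs.1 hs.2
      exact ⟨h0, h1.le⟩
    have h := hcont.tendsto_nhdsWithin hmaps
    rw [hphi1] at h
    rwa [hIcoIio] at h
  have T2 : Tendsto (fun b => ∫ t in (0:ℝ)..(phi l b), F k t) (𝓝[<] (1:ℝ))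
      (𝓝 (∫ t in (0:ℝ)..1, F k t)) :=
    hck.tendsto.comp Tphi
  have heq : (fun b => (1 + l) * ∫ s in (0:ℝ)..b, F l s)
      =ᶠ[𝓝[<] (1:ℝ)] (fun b => ∫ t in (0:ℝ)..(phi l b), F k t) := by
    rw [← hIcoIio]
    filter_upwards [self_mem_nhdsWithin] with b hb
    exact key hl0 hl1 hk0 hk2 hb.1 hb.2
  have := tendsto_nhds_unique (T1.congr' heq) T2
  rw [show ellipticK k = ∫ t in (0:ℝ)..1, F k t from rfl,
      show ellipticK l = ∫ t in (0:ℝ)..1, F l t from rfl]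
  exact this.symm

end LandenAux

theorem ellipticK_landen (k k' : ℝ) (hk : 0 < k) (hk1 : k < 1)
    (hk' : 0 < k') (hk'1 : k' < 1) (h : k ^ 2 + k' ^ 2 = 1) :
    ellipticK k = (2 / (1 + k')) * ellipticK ((1 - k') / (1 + k')) := by
  have h1 : (0:ℝ) < 1 + k' := by linarith
  have h2 : (0:ℝ) < 1 - k' := by linarith
  set l := (1 - k') / (1 + k') with hl
  have hl0 : 0 < l := div_pos h2 h1
  have hl1 : l < 1 := by rw [div_lt_one h1]; linarith
  have h1l : 1 + l = 2 / (1 + k') := by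
    rw [hl]; field_simp; ring
  have hk2 : k ^ 2 * (1 + l) ^ 2 = 4 * l := by
    rw [h1l, hl]
    field_simp
    nlinarith [h]
  rw [← h1l]
  exact LandenAux.landen_aux hl0 hl1 hk.le hk2
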